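/- With the dynamic program E_t^r as above (E_{u+1}^r = 0, E_t^0 = 0, E_t^r = p_t·max(v_t + E_{t+1}^{r-1}, E_{t+1}^r) + (1-p_t)·E_{t+1}^r), the inequality E_t^r ≥ max(p_t·v_t + (1 - p_t/r)·E_{t+1}^r, E_{t+1}^r) holds for all t ∈ [1,u] and r ∈ [1,C]. -/

import Mathlib

/-- Concavity of the one-step max operator. -/
lemma maxconc (w a0 a1 a2 a3 : ℝ) (h1 : a2 + a0 ≤ 2 * a1) (h2 : a3 + a1 ≤ 2 * a2) :
    max (w + a2) a3 + max (w + a0) a1 ≤ 2 * max (w + a1) a2 := by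
  rcases max_cases (w + a2) a3 with ⟨e1, _⟩ | ⟨e1, _⟩ <;>
    rcases max_cases (w + a0) a1 with ⟨e2, _⟩ | ⟨e2, _⟩ <;>
      rw [e1, e2] <;>
        nlinarith [le_max_left (w + a1) a2, le_max_right (w + a1) a2]

theorem stmt_9 (u : ℕ) (hu : 1 ≤ u) (p v : ℕ → ℝ)
    (hp : ∀ t, 0 ≤ p t ∧ p t ≤ 1) (hv : ∀ t, 0 ≤ v t)
    (E : ℕ → ℕ → ℝ)
    (hEu : ∀ r, E (u + 1) r = 0)
    (hE0 : ∀ t, E t 0 = 0)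
    (hErec : ∀ t r, 1 ≤ t → t ≤ u → 1 ≤ r →
      E t r = p t * max (v t + E (t + 1) (r - 1)) (E (t + 1) r)
        + (1 - p t) * E (t + 1) r) :
    ∀ t r, 1 ≤ t → t ≤ u → 1 ≤ r →
      E t r ≥ max (p t * v t + (1 - p t / (r : ℝ)) * E (t + 1) r) (E (t + 1) r) := by
  -- concavity of E t · for all reachable t
  have key : ∀ k t, 1 ≤ t → t + k = u + 1 →
      ∀ r, E t (r + 2) + E t r ≤ 2 * E t (r + 1) := by
    intro k
    induction k with
    | zero =>
      intro t ht hk r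
      have : t = u + 1 := by omega
      subst this
      simp [hEu]
    | succ k ih =>
      intro t ht hk r
      have htu : t ≤ u := by omega
      have ih' := ih (t + 1) (by omega) (by omega)
      have hp0 := (hp t).1
      have hp1 := (hp t).2
      match r with
      | 0 =>
        have r2 : E t 2 = p t * max (v t + E (t + 1) 1) (E (t + 1) 2)
            + (1 - p t) * E (t + 1) 2 := by
          simpa using hErec t 2 ht htu (by omega)
        have r1 : E t 1 = p t * max (v t + E (t + 1) 0) (E (t + 1) 1)
            + (1 - p t) * E (t + 1) 1 := by
          simpa using hErec t 1 ht htu (by omega)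
        have c0 := ih' 0
        have hA0 : E (t + 1) 0 = 0 := hE0 _
        have hm : max (v t + E (t + 1) 1) (E (t + 1) 2)
            ≤ 2 * max (v t + E (t + 1) 0) (E (t + 1) 1) := by
          apply max_le
          · nlinarith [le_max_left (v t + E (t + 1) 0) (E (t + 1) 1),
              le_max_right (v t + E (t + 1) 0) (E (t + 1) 1)]
          · nlinarith [le_max_right (v t + E (t + 1) 0) (E (t + 1) 1)]
        rw [r2, r1, hE0 t]
        nlinarith [ih' 0, hA0, le_max_right (v t + E (t + 1) 0) (E (t + 1) 1)]
      | (s + 1) =>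
        have r3 : E t (s + 3) = p t * max (v t + E (t + 1) (s + 2)) (E (t + 1) (s + 3))
            + (1 - p t) * E (t + 1) (s + 3) := by
          simpa using hErec t (s + 3) ht htu (by omega)
        have r2 : E t (s + 2) = p t * max (v t + E (t + 1) (s + 1)) (E (t + 1) (s + 2))
            + (1 - p t) * E (t + 1) (s + 2) := by
          simpa using hErec t (s + 2) ht htu (by omega)
        have r1 : E t (s + 1) = p t * max (v t + E (t + 1) s) (E (t + 1) (s + 1))
            + (1 - p t) * E (t + 1) (s + 1) := by
          simpa using hErec t (s + 1) ht htu (by omega)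
        have hm := maxconc (v t) (E (t + 1) s) (E (t + 1) (s + 1)) (E (t + 1) (s + 2))
          (E (t + 1) (s + 3)) (ih' s) (ih' (s + 1))
        have h3 : s + 1 + 2 = s + 3 := by omega
        rw [h3, r3, r2, r1]
        nlinarith [ih' s, ih' (s + 1)]
  -- ratio property: (s+1) * E t s ≥ s * E t (s+1)
  have ratio : ∀ t, 1 ≤ t → t ≤ u + 1 → ∀ s : ℕ,
      ((s : ℝ) + 1) * E t s ≥ (s : ℝ) * E t (s + 1) := by
    intro t ht htu s
    have hconc := key (u + 1 - t) t ht (by omega)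
    induction s with
    | zero => simp [hE0]
    | succ s ihs =>
      have hc := hconc s
      have hmul : ((s : ℝ) + 1) * (E t (s + 2) + E t s)
          ≤ ((s : ℝ) + 1) * (2 * E t (s + 1)) :=
        mul_le_mul_of_nonneg_left hc (by positivity)
      push_cast
      nlinarith [ihs]
  -- main statement
  intro t r ht htu hr
  obtain ⟨s, rfl⟩ : ∃ s, r = s + 1 := ⟨r - 1, by omega⟩
  have rec1 : E t (s + 1) = p t * max (v t + E (t + 1) s) (E (t + 1) (s + 1))
      + (1 - p t) * E (t + 1) (s + 1) := by
    simpa using hErec t (s + 1) ht htu (by omega)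
  have hp0 := (hp t).1
  have hp1 := (hp t).2
  rw [ge_iff_le, max_le_iff]
  constructor
  · have hrat := ratio (t + 1) (by omega) (by omega) s
    have hc : (0 : ℝ) < (s : ℝ) + 1 := by positivity
    have hcast : ((s + 1 : ℕ) : ℝ) = (s : ℝ) + 1 := by push_cast; ring
    set q := p t / ((s : ℝ) + 1) with hqdef
    have hq0 : 0 ≤ q := by positivity
    have hqc : p t = q * ((s : ℝ) + 1) := by rw [hqdef, div_mul_cancel₀ _ hc.ne']
    have h1 : p t * (v t + E (t + 1) s)
        ≤ p t * max (v t + E (t + 1) s) (E (t + 1) (s + 1)) :=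
      mul_le_mul_of_nonneg_left (le_max_left _ _) hp0
    have h2 : q * ((s : ℝ) * E (t + 1) (s + 1))
        ≤ q * (((s : ℝ) + 1) * E (t + 1) s) :=
      mul_le_mul_of_nonneg_left hrat hq0
    have hpc1 : p t * E (t + 1) (s + 1) = q * (((s : ℝ) + 1) * E (t + 1) (s + 1)) := by
      rw [hqc]; ring
    have hpc2 : p t * E (t + 1) s = q * (((s : ℝ) + 1) * E (t + 1) s) := by
      rw [hqc]; ring
    rw [rec1, hcast, ← hqdef]
    nlinarith [h1, h2, hpc1, hpc2]
  · rw [rec1]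
    nlinarith [le_max_right (v t + E (t + 1) s) (E (t + 1) (s + 1))]
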